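/- arXiv:2503.01388 — 2 statements merged into one kernel-verified Lean document; each statement's English description precedes it below -/
import Mathlib

section
/- Let Q be a nonempty string, r a nonnegative integer, and P and T strings with |P| ≤ |T|. Set P̄ := Q^∞[r..r+|P|) and T̄ := Q^∞[0..|T|), and define E := {τ − π : π ∈ Mis(P,P̄), τ ∈ Mis(T,T̄)}. Then for every integer x with 0 ≤ x ≤ |T|−|P|, x ≡ r (mod |Q|), and x ∉ E, it holds that δ_H(P, T[x..x+|P|)) = δ_H(P, P̄) + δ_H(T̄[x..x+|P|), T[x..x+|P|)). -/
/-- Mismatch positions of two (equal-length) strings: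
`Mis(X,Y) = {i : X[i] ≠ Y[i]}`. -/
def mis {α : Type*} [DecidableEq α] [Inhabited α] (X Y : List α) : Finset ℕ :=
  (Finset.range (min X.length Y.length)).filter (fun i => X.getD i default ≠ Y.getD i default)

/-- Hamming distance of two (equal-length) strings: the number of mismatch positions. -/
def hdist {α : Type*} [DecidableEq α] [Inhabited α] (X Y : List α) : ℕ := (mis X Y).card

/-- The fragment `S[x..x+L)`. -/
def frag {α : Type*} (S : List α) (x L : ℕ) : List α := (S.drop x).take L

/-- `Q^∞[a..a+L)`: the string of length `L` whose `i`-th character is `Q[(a+i) mod |Q|]`. -/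
def qinf {α : Type*} [Inhabited α] (Q : List α) (a L : ℕ) : List α :=
  (List.range L).map (fun i => Q.getD ((a + i) % Q.length) default)

/-- A nonempty string is primitive if it is not of the form `Y^h` with `h ≥ 2`. -/
def Primitive {α : Type*} (Q : List α) : Prop :=
  Q ≠ [] ∧ ∀ (Y : List α) (h : ℕ), 2 ≤ h → Q ≠ (List.replicate h Y).flatten

lemma frag_getD {α : Type*} [Inhabited α] (S : List α) (x L i : ℕ) (h : i < L) :
    (frag S x L).getD i default = S.getD (x + i) default := by
  simp [frag, List.getD_eq_getElem?_getD, List.getElem?_take, h, List.getElem?_drop]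

lemma qinf_getD {α : Type*} [Inhabited α] (Q : List α) (a L i : ℕ) (h : i < L) :
    (qinf Q a L).getD i default = Q.getD ((a + i) % Q.length) default := by
  simp [qinf, List.getD_eq_getElem?_getD, List.getElem?_range h]

/-- With `P̄ = Q^∞[r..r+|P|)`, `T̄ = Q^∞[0..|T|)` and
`E = {τ - π : π ∈ Mis(P,P̄), τ ∈ Mis(T,T̄)}`, for every position `x ≡ r (mod |Q|)` with
`x ∉ E` the triangle inequality holds with equality:
`δ_H(P, T[x..x+|P|)) = δ_H(P,P̄) + δ_H(T̄[x..x+|P|), T[x..x+|P|))`. -/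
theorem stmt5 {α : Type*} [DecidableEq α] [Inhabited α]
    (Q P T : List α) (hQ : Q ≠ []) (r : ℕ) (hPT : P.length ≤ T.length) :
    ∀ x : ℕ, x + P.length ≤ T.length → x % Q.length = r % Q.length →
      (¬ ∃ π ∈ mis P (qinf Q r P.length), ∃ τ ∈ mis T (qinf Q 0 T.length),
        (x : ℤ) = (τ : ℤ) - (π : ℤ)) →
      hdist P (frag T x P.length) =
        hdist P (qinf Q r P.length) +
          hdist (frag (qinf Q 0 T.length) x P.length) (frag T x P.length) := by
  
  intro x hx hmod hE
  set L := P.length with hL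
  have hTb : (qinf Q 0 T.length).length = T.length := by simp [qinf]
  have hfT : (frag T x L).length = L := by simp [frag]; omega
  have hfTb : (frag (qinf Q 0 T.length) x L).length = L := by simp [frag, qinf]; omega
  have hPb : (qinf Q r L).length = L := by simp [qinf]
  have hmod2 : ∀ i, (x + i) % Q.length = (r + i) % Q.length := by
    intro i; rw [Nat.add_mod, hmod, ← Nat.add_mod]
  have key1 : ∀ i, i < L →
      (frag (qinf Q 0 T.length) x L).getD i default = (qinf Q r L).getD i default := by
    intro i hi
    rw [frag_getD _ _ _ _ hi, qinf_getD _ _ _ _ hi, qinf_getD _ _ _ _ (by omega),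
      Nat.zero_add, hmod2]
  have key2 : ∀ i, i < L → P.getD i default ≠ (qinf Q r L).getD i default →
      (frag T x L).getD i default = (qinf Q r L).getD i default := by
    intro i hi hne
    by_contra hcon
    apply hE
    refine ⟨i, ?_, x + i, ?_, by push_cast; ring⟩
    · simp only [mis, Finset.mem_filter, Finset.mem_range, hPb, min_self]
      exact ⟨by omega, hne⟩
    · simp only [mis, Finset.mem_filter, Finset.mem_range, hTb, min_self]
      refine ⟨by omega, ?_⟩
      intro heq
      apply hcon
      rw [frag_getD _ _ _ _ hi] at hcon ⊢
      rw [heq, qinf_getD _ _ _ _ (by omega), Nat.zero_add, hmod2, ← qinf_getD _ _ L _ hi]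
  have hunion : mis P (frag T x L) =
      mis P (qinf Q r L) ∪ mis (frag (qinf Q 0 T.length) x L) (frag T x L) := by
    ext i
    simp only [mis, Finset.mem_union, Finset.mem_filter, Finset.mem_range, hfT, hfTb, hPb,
      min_self, ← hL]
    constructor
    · rintro ⟨hi, hne⟩
      by_cases hB : P.getD i default = (qinf Q r L).getD i default
      · exact Or.inr ⟨hi, by rw [key1 i hi, ← hB]; exact hne⟩
      · exact Or.inl ⟨hi, hB⟩
    · rintro (⟨hi, hne⟩ | ⟨hi, hne⟩)
      · exact ⟨hi, by rw [key2 i hi hne]; exact hne⟩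
      · rw [key1 i hi] at hne
        by_cases hB : P.getD i default = (qinf Q r L).getD i default
        · exact ⟨hi, by rw [hB]; exact hne⟩
        · exact ⟨hi, fun _ => hne (key2 i hi hB).symm⟩
  have hdisj : Disjoint (mis P (qinf Q r L))
      (mis (frag (qinf Q 0 T.length) x L) (frag T x L)) := by
    rw [Finset.disjoint_left]
    intro i hiB hiC
    simp only [mis, Finset.mem_filter, Finset.mem_range, hfT, hfTb, hPb, min_self,
      ← hL] at hiB hiC
    exact hiC.2 ((key1 i hiC.1).trans (key2 i hiB.1 hiB.2).symm)
  rw [hdist, hdist, hdist, hunion, Finset.card_union_of_disjoint hdisj]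
end

section
/- Assume the setup: k ≥ 1 is an integer, P and T are strings with |P| ≤ |T|, Q is a primitive string with 128k·|Q| ≤ |P|, r ∈ {0,…,|Q|−1}, P̄ := Q^∞[r..r+|P|), T̄ := Q^∞[0..|T|), δ_H(P,P̄) ≤ 2k, and δ_H(T,T̄) ≤ 6k; τ_0 < τ_1 < … < τ_{b−1} are the elements of Mis(T,T̄), with τ_{−1} := −1 and τ_b := |T|, and R_i := {x ∈ ℤ : τ_{i−1} < x ≤ τ_i} for 0 ≤ i ≤ b; C_r := {x ∈ ℤ≥0 : x ≡ r (mod |Q|)}. Then for every set A of nonnegative integers and all integers s, t with 0 ≤ s ≤ t ≤ b satisfying δ_H(P,P̄) + (t − s) ≤ k, it holds that Ext_k(P,T,A ∩ R_s) ∩ R_t = ((C_r ∩ A ∩ R_s) + |P|) ∩ R_t. -/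
/-- `Occ_k(P,T)`: the set of starting positions of `k`-mismatch occurrences of `P` in `T`. -/
def occSet {α : Type*} [DecidableEq α] [Inhabited α] (k : ℕ) (P T : List α) : Set ℕ :=
  {x | x + P.length ≤ T.length ∧ hdist P (frag T x P.length) ≤ k}

/-- `Ext_k(P,T,A) = {x + |P| : x ∈ Occ_k(P,T) ∩ A}` (as a set of integers). -/
def extSet {α : Type*} [DecidableEq α] [Inhabited α] (k : ℕ) (P T : List α) (A : Set ℤ) :
    Set ℤ :=
  {y | ∃ x : ℕ, x ∈ occSet k P T ∧ (x : ℤ) ∈ A ∧ y = (x : ℤ) + P.length}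

section AuxLemmas
set_option linter.unusedSectionVars false

variable {α : Type*} [DecidableEq α] [Inhabited α]

lemma length_qinf (Q : List α) (a L : ℕ) : (qinf Q a L).length = L := by simp [qinf]

lemma getD_qinf (Q : List α) (a L i : ℕ) (h : i < L) :
    (qinf Q a L).getD i default = Q.getD ((a + i) % Q.length) default := by
  rw [List.getD_eq_getElem _ _ (by simp [length_qinf, h])]
  simp [qinf]

lemma qinf_congr (Q : List α) (a b L : ℕ) (h : a % Q.length = b % Q.length) :
    qinf Q a L = qinf Q b L := by
  unfold qinf
  congr 1
  funext i
  congr 1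
  rw [Nat.add_mod, h, ← Nat.add_mod]

lemma mem_mis {X Y : List α} {i : ℕ} :
    i ∈ mis X Y ↔ i < min X.length Y.length ∧ X.getD i default ≠ Y.getD i default := by
  simp [mis]

lemma mis_comm (X Y : List α) : mis X Y = mis Y X := by
  ext i
  simp only [mis, Finset.mem_filter, Finset.mem_range, Nat.min_comm]
  exact and_congr_right (fun _ => ne_comm)

lemma hdist_comm (X Y : List α) : hdist X Y = hdist Y X := by
  unfold hdist; rw [mis_comm]

lemma length_frag {S : List α} {x L : ℕ} (h : x + L ≤ S.length) : (frag S x L).length = L := by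
  simp [frag]; omega

lemma getD_frag {S : List α} {x L i : ℕ} (h : x + L ≤ S.length) (hi : i < L) :
    (frag S x L).getD i default = S.getD (x + i) default := by
  rw [List.getD_eq_getElem _ _ (by rw [length_frag h]; exact hi),
    List.getD_eq_getElem _ _ (by omega)]
  simp [frag]

lemma frag_qinf (Q : List α) (N x L : ℕ) (h : x + L ≤ N) :
    frag (qinf Q 0 N) x L = qinf Q x L := by
  apply List.ext_getElem
  · rw [length_frag (by rw [length_qinf]; exact h), length_qinf]
  · intro n h1 h2
    rw [length_frag (by rw [length_qinf]; exact h)] at h1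
    rw [← List.getD_eq_getElem _ default, ← List.getD_eq_getElem _ default,
      getD_frag (by rw [length_qinf]; exact h) h1, getD_qinf _ _ _ _ h1,
      List.getD_eq_getElem _ _ (by simp [length_qinf]; omega)]
    simp [qinf]

lemma hdist_triangle (X Y Z : List α) (h1 : X.length = Y.length) (h2 : Y.length = Z.length) :
    hdist X Z ≤ hdist X Y + hdist Y Z := by
  have : mis X Z ⊆ mis X Y ∪ mis Y Z := by
    intro i hi
    rw [mem_mis] at hi
    rw [Finset.mem_union, mem_mis, mem_mis]
    by_cases h : X.getD i default = Y.getD i default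
    · exact Or.inr ⟨by omega, by rw [← h]; exact hi.2⟩
    · exact Or.inl ⟨by omega, h⟩
  calc hdist X Z ≤ (mis X Y ∪ mis Y Z).card := Finset.card_le_card this
    _ ≤ _ := Finset.card_union_le _ _

lemma hdist_frag_le (X Y : List α) (x L : ℕ) (hlen : X.length = Y.length)
    (h : x + L ≤ X.length) :
    hdist (frag X x L) (frag Y x L) ≤ (mis X Y ∩ Finset.Ico x (x + L)).card := by
  apply Finset.card_le_card_of_injOn (fun i => x + i)
  · intro i hi
    simp only [Finset.mem_coe] at hi ⊢
    rw [mem_mis] at hi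
    have hiL : i < L := by
      rw [length_frag h, length_frag (by omega)] at hi; omega
    rw [Finset.mem_inter, mem_mis, Finset.mem_Ico]
    refine ⟨⟨by omega, ?_⟩, by omega, by omega⟩
    rw [getD_frag h hiL, getD_frag (by omega) hiL] at hi
    exact hi.2
  · intro a _ b _ hab
    simpa using hab

lemma length_flatten_replicate (Y : List α) (n : ℕ) :
    (List.replicate n Y).flatten.length = n * Y.length := by
  induction n with
  | zero => simp
  | succ n ih => simp only [List.replicate_succ, List.flatten_cons, List.length_append, ih]; ring

lemma getD_flatten_replicate (Y : List α) (n i : ℕ) (d : α) (h : i < n * Y.length) :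
    ((List.replicate n Y).flatten).getD i d = Y.getD (i % Y.length) d := by
  induction n generalizing i with
  | zero => omega
  | succ n ih =>
    rw [List.replicate_succ, List.flatten_cons]
    by_cases hi : i < Y.length
    · rw [List.getD_append _ _ _ _ hi, Nat.mod_eq_of_lt hi]
    · push_neg at hi
      have hnl : (n+1) * Y.length = Y.length + n * Y.length := by ring
      rw [List.getD_append_right _ _ _ _ hi, ih _ (by omega)]
      congr 1
      conv_rhs => rw [show i = Y.length + (i - Y.length) by omega]
      rw [Nat.add_mod_left]

/-- Periodicity step: from period c to n copies. -/
lemma periodic_mul {f : ℕ → α} {c : ℕ} (hf : ∀ i, f (i + c) = f i) (n i : ℕ) :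
    f (i + c * n) = f i := by
  induction n with
  | zero => simp
  | succ n ih => rw [Nat.mul_succ, ← Nat.add_assoc, hf, ih]

lemma rotation_lemma {Q : List α} (hQ : Primitive Q) {c : ℕ} (hc0 : 0 < c)
    (hcq : c < Q.length) :
    ∃ i < Q.length, Q.getD ((i + c) % Q.length) default ≠ Q.getD i default := by
  by_contra hcon
  push_neg at hcon
  set q := Q.length with hq
  have hq0 : 0 < q := by omega
  set F : ℕ → α := fun i => Q.getD (i % q) default with hF
  have hFc : ∀ i, F (i + c) = F i := by
    intro i
    have := hcon (i % q) (Nat.mod_lt _ hq0)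
    simp only [hF]
    rw [Nat.add_mod, Nat.mod_eq_of_lt hcq]
    exact this
  have hFq : ∀ i, F (i + q) = F i := by
    intro i; simp only [hF, Nat.add_mod_right]
  set d := Nat.gcd c q with hd
  have hd0 : 0 < d := Nat.gcd_pos_of_pos_left _ hc0
  have hdc : d ≤ c := Nat.le_of_dvd hc0 (Nat.gcd_dvd_left _ _)
  have hdq : d ∣ q := Nat.gcd_dvd_right _ _
  obtain ⟨u, hu⟩ : ∃ u : ℕ, (c * u) % q = d % q := by
    have hbez : (d : ℤ) = c * Nat.gcdA c q + q * Nat.gcdB c q := Nat.gcd_eq_gcd_ab c q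
    have hqz : (q : ℤ) ≠ 0 := by exact_mod_cast hq0.ne'
    refine ⟨((Nat.gcdA c q) % q).toNat, ?_⟩
    have h1 : ((c : ℤ) * ((Nat.gcdA c q) % q).toNat) % q = (d : ℤ) % q := by
      rw [Int.toNat_of_nonneg (Int.emod_nonneg _ hqz), Int.mul_emod,
        Int.emod_emod_of_dvd _ dvd_rfl, ← Int.mul_emod, hbez,
        Int.add_mul_emod_self_left]
    exact_mod_cast h1
  have hdmod : d % q = d := Nat.mod_eq_of_lt (by omega)
  have hge : d ≤ c * u := by
    by_contra hlt
    push_neg at hlt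
    rw [Nat.mod_eq_of_lt (by omega), hdmod] at hu
    omega
  obtain ⟨w, hw⟩ : q ∣ c * u - d := (Nat.modEq_iff_dvd' hge).mp (Nat.ModEq.symm hu)
  have hFd : ∀ i, F (i + d) = F i := by
    intro i
    have h1 : F (i + d + q * w) = F (i + d) := periodic_mul hFq w (i + d)
    have h2 : i + d + q * w = i + c * u := by omega
    rw [← h1, h2, periodic_mul hFc u i]
  have hmap : ∀ i, F (i % d) = F i := Function.Periodic.map_mod_nat hFd
  have hdltq : d < q := by omega
  obtain ⟨h', hh'⟩ := hdq
  have hh2 : 2 ≤ h' := by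
    rcases Nat.lt_or_ge h' 2 with h | h
    · interval_cases h' <;> omega
    · exact h
  have hqdh : h' * d = q := by rw [hh', Nat.mul_comm]
  refine hQ.2 (Q.take d) h' hh2 ?_
  have htlen : (Q.take d).length = d := by simp; omega
  apply List.ext_getElem
  · rw [length_flatten_replicate, htlen, ← hq, hqdh]
  · intro n h1 h2
    rw [← List.getD_eq_getElem _ default, ← List.getD_eq_getElem _ default,
      getD_flatten_replicate _ _ _ _ (by rw [htlen]; omega), htlen]
    have hnd : n % d < d := Nat.mod_lt _ hd0
    have e1 : (Q.take d).getD (n % d) default = Q.getD (n % d) default := by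
      rw [List.getD_eq_getElem _ _ (by rw [htlen]; exact hnd),
        List.getD_eq_getElem _ _ (by omega)]
      simp [List.getElem_take]
    rw [e1]
    have hnq : n < q := by rw [hq]; exact h1
    have e2 : Q.getD n default = F n := by
      simp only [hF]
      rw [Nat.mod_eq_of_lt hnq]
    have e3 : Q.getD (n % d) default = F (n % d) := by
      simp only [hF]
      rw [Nat.mod_eq_of_lt (lt_of_lt_of_le hnd (le_of_lt hdltq))]
    rw [e2, e3, hmap]

lemma qinf_hdist_lower (Q : List α) (hQ : Primitive Q) (a b L : ℕ)
    (hab : a % Q.length ≠ b % Q.length) :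
    L / Q.length ≤ hdist (qinf Q a L) (qinf Q b L) := by
  set q := Q.length with hq
  have hq0 : 0 < q := List.length_pos_iff.mpr hQ.1
  have haq : a % q < q := Nat.mod_lt _ hq0
  have hbq : b % q < q := Nat.mod_lt _ hq0
  set v1 := b % q + q - a % q with hv1
  set c := v1 % q with hc
  have hc0 : 0 < c := by
    rcases Nat.lt_or_ge v1 q with h | h
    · rw [hc, Nat.mod_eq_of_lt h]; omega
    · have hv1q : v1 - q < q := by omega
      rw [hc, Nat.mod_eq_sub_mod h, Nat.mod_eq_of_lt hv1q]
      omega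
  have hcq : c < q := Nat.mod_lt _ hq0
  obtain ⟨i0, hi0q, hi0⟩ := rotation_lemma hQ hc0 hcq
  set j0 := (i0 + (q - a % q)) % q with hj0
  have hj0q : j0 < q := Nat.mod_lt _ hq0
  have hkey1 : (a + j0) % q = i0 := by
    rw [hj0, Nat.add_mod_mod]
    have e : a + (i0 + (q - a % q)) = i0 + q * (1 + a / q) := by
      have h1 := Nat.mod_add_div a q
      have h2 : q * (1 + a / q) = q + q * (a / q) := by ring
      omega
    rw [e, Nat.add_mul_mod_self_left, Nat.mod_eq_of_lt hi0q]
  have hkey2 : (b + j0) % q = (i0 + c) % q := by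
    rw [hj0, Nat.add_mod_mod, hc, Nat.add_mod_mod]
    have e : b + (i0 + (q - a % q)) = (i0 + v1) + q * (b / q) := by
      have h1 := Nat.mod_add_div b q
      have h2 := Nat.mod_add_div a q
      omega
    rw [e, Nat.add_mul_mod_self_left]
  have := Finset.card_le_card_of_injOn (fun l => j0 + l * q)
    (s := Finset.range (L / q)) (t := mis (qinf Q a L) (qinf Q b L))
    (by
      intro l hl
      simp only [Finset.mem_coe] at hl ⊢
      rw [Finset.mem_range] at hl
      have hjL : j0 + l * q < L := by
        have h3 : (l + 1) * q ≤ L / q * q := Nat.mul_le_mul_right q (by omega)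
        have h4 : L / q * q ≤ L := Nat.div_mul_le_self L q
        have h5 : (l + 1) * q = l * q + q := by ring
        omega
      rw [mem_mis, length_qinf, length_qinf]
      refine ⟨by simpa using hjL, ?_⟩
      rw [getD_qinf _ _ _ _ hjL, getD_qinf _ _ _ _ hjL]
      have ea : (a + (j0 + l * q)) % q = i0 := by
        rw [← Nat.add_assoc, Nat.add_mul_mod_self_right, hkey1]
      have eb : (b + (j0 + l * q)) % q = (i0 + c) % q := by
        rw [← Nat.add_assoc, Nat.add_mul_mod_self_right, hkey2]
      rw [← hq, ea, eb]
      exact fun h => hi0 h.symm)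
    (by
      intro l1 _ l2 _ h
      simp only at h
      have : l1 * q = l2 * q := by omega
      exact Nat.eq_of_mul_eq_mul_right hq0 this)
  simpa [hdist] using this

end AuxLemmas

/-- First case of the key structural lemma: if `δ_H(P,P̄) + (t - s) ≤ k` then
`Ext_k(P, T, A ∩ R_s) ∩ R_t = ((C_r ∩ A ∩ R_s) + |P|) ∩ R_t`. -/
theorem stmt7 {α : Type*} [DecidableEq α] [Inhabited α]
    (k : ℕ) (hk : 1 ≤ k) (P T Q : List α) (hPT : P.length ≤ T.length)
    (hQprim : Primitive Q) (hQP : 128 * k * Q.length ≤ P.length)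
    (r : ℕ) (hr : r < Q.length)
    (hPper : hdist P (qinf Q r P.length) ≤ 2 * k)
    (hTper : hdist T (qinf Q 0 T.length) ≤ 6 * k)
    (b : ℕ) (τ : ℤ → ℤ)
    (hmono : ∀ i j : ℤ, 0 ≤ i → i < j → j < b → τ i < τ j)
    (hmem : ∀ i : ℤ, 0 ≤ i → i < b → ∃ m ∈ mis T (qinf Q 0 T.length), (m : ℤ) = τ i)
    (hsurj : ∀ m ∈ mis T (qinf Q 0 T.length), ∃ i : ℤ, 0 ≤ i ∧ i < b ∧ τ i = m)
    (hneg : τ (-1) = -1) (hend : τ b = T.length)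
    (A : Set ℤ) (hA : ∀ x ∈ A, 0 ≤ x)
    (s t : ℤ) (hs : 0 ≤ s) (hst : s ≤ t) (htb : t ≤ b)
    (hcase : (hdist P (qinf Q r P.length) : ℤ) + (t - s) ≤ k) :
    extSet k P T (A ∩ Set.Ioc (τ (s - 1)) (τ s)) ∩ Set.Ioc (τ (t - 1)) (τ t) =
      ((fun z => z + (P.length : ℤ)) ''
          ({x : ℤ | 0 ≤ x ∧ x % (Q.length : ℤ) = (r : ℤ) % (Q.length : ℤ)} ∩ A ∩
            Set.Ioc (τ (s - 1)) (τ s))) ∩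
        Set.Ioc (τ (t - 1)) (τ t) := by
  classical
  set q := Q.length with hq
  set m := P.length with hm
  set Tb := qinf Q 0 T.length with hTbdef
  have hq0 : 0 < q := by omega
  have hmq : 128 * k ≤ m / q := (Nat.le_div_iff_mul_le hq0).mpr hQP
  have hmisT : ∀ m' ∈ mis T Tb, m' < T.length := by
    intro m' hm'
    rw [mem_mis] at hm'
    have := hm'.1
    rw [hTbdef, length_qinf, Nat.min_self] at this
    exact this
  -- endpoints of τ stay in range
  have hA1 : ∀ i : ℤ, -1 ≤ i → i ≤ b → -1 ≤ τ i ∧ τ i ≤ (T.length : ℤ) := by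
    intro i h1 h2
    by_cases hib : i = b
    · subst hib
      rw [hend]
      exact ⟨by omega, le_refl _⟩
    by_cases hin : i = -1
    · subst hin
      rw [hneg]
      exact ⟨le_refl _, by omega⟩
    · obtain ⟨m', hm', he⟩ := hmem i (by omega) (by omega)
      have := hmisT m' hm'
      omega
  have hB : ∀ i j : ℤ, -1 ≤ i → i < j → j ≤ b → τ i < τ j := by
    intro i j h1 h2 h3
    by_cases hin : i = -1
    · subst hin
      rw [hneg]
      by_cases hjb : j = b
      · subst hjb; rw [hend]; omega
      · obtain ⟨m', hm', he⟩ := hmem j (by omega) (by omega)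
        omega
    · have h0i : 0 ≤ i := by omega
      by_cases hjb : j = b
      · subst hjb
        rw [hend]
        obtain ⟨m', hm', he⟩ := hmem i h0i (by omega)
        have := hmisT m' hm'
        omega
      · exact hmono i j h0i h2 (by omega)
  have hBle : ∀ i j : ℤ, -1 ≤ i → i ≤ j → j ≤ b → τ i ≤ τ j := by
    intro i j h1 h2 h3
    rcases eq_or_lt_of_le h2 with rfl | h
    · exact le_refl _
    · exact le_of_lt (hB i j h1 h h3)
  have htT : τ t ≤ (T.length : ℤ) := (hA1 t (by omega) htb).2
  -- window counting for the ⊇ direction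
  have hwin : ∀ x' : ℕ, τ (s - 1) < (x' : ℤ) → (x' : ℤ) ≤ τ s →
      τ (t - 1) < (x' : ℤ) + m → (x' : ℤ) + m ≤ τ t →
      ((mis T Tb) ∩ Finset.Ico x' (x' + m)).card ≤ (t - s).toNat := by
    intro x' hx1 hx2 hy1 hy2
    rw [← Int.card_Ico s t]
    set f : ℕ → ℤ := fun m' =>
      if h : m' ∈ mis T Tb then Classical.choose (hsurj m' h) else 0 with hf
    apply Finset.card_le_card_of_injOn f
    · intro m' hmem'
      rw [Finset.mem_coe, Finset.mem_inter, Finset.mem_Ico] at hmem'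
      have hmis := hmem'.1
      have hlo := hmem'.2.1
      have hhi := hmem'.2.2
      simp only [hf, dif_pos hmis]
      obtain ⟨h0i, hib, hti⟩ := Classical.choose_spec (hsurj m' hmis)
      rw [Finset.mem_coe, Finset.mem_Ico]
      constructor
      · by_contra hlt
        push_neg at hlt
        have := hBle (Classical.choose (hsurj m' hmis)) (s - 1) (by omega) (by omega) (by omega)
        omega
      · by_contra hge
        push_neg at hge
        have := hBle t (Classical.choose (hsurj m' hmis)) (by omega) hge (by omega)
        omega
    · intro a ha b' hb' hab
      have hamis : a ∈ mis T Tb := (Finset.mem_inter.mp (Finset.mem_coe.mp ha)).1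
      have hbmis : b' ∈ mis T Tb := (Finset.mem_inter.mp (Finset.mem_coe.mp hb')).1
      simp only [hf, dif_pos hamis, dif_pos hbmis] at hab
      have sa := (Classical.choose_spec (hsurj a hamis)).2.2
      have sb := (Classical.choose_spec (hsurj b' hbmis)).2.2
      rw [hab, sb] at sa
      exact_mod_cast sa.symm
  ext y
  simp only [Set.mem_inter_iff, Set.mem_image, Set.mem_setOf_eq, extSet, occSet, Set.mem_Ioc]
  constructor
  · rintro ⟨⟨x', ⟨hxlen, hxdist⟩, ⟨hxA, hxlo, hxhi⟩, rfl⟩, hylo, hyhi⟩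
    rw [← hm] at hxlen hxdist
    have hmodnat : x' % q = r % q := by
      by_contra hne
      have h1 : m / q ≤ hdist (qinf Q r m) (qinf Q x' m) :=
        qinf_hdist_lower Q hQprim r x' m (fun h => hne h.symm)
      have e1 : frag Tb x' m = qinf Q x' m := frag_qinf Q T.length x' m hxlen
      have h2 : hdist (frag T x' m) (qinf Q x' m) ≤ 6 * k := by
        rw [← e1]
        calc hdist (frag T x' m) (frag Tb x' m)
            ≤ (mis T Tb ∩ Finset.Ico x' (x' + m)).card :=
              hdist_frag_le T Tb x' m (by rw [hTbdef, length_qinf]) hxlen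
          _ ≤ (mis T Tb).card := Finset.card_le_card Finset.inter_subset_left
          _ ≤ 6 * k := hTper
      have h3 : hdist (qinf Q r m) (qinf Q x' m) ≤
          hdist (qinf Q r m) P + (hdist P (frag T x' m) + hdist (frag T x' m) (qinf Q x' m)) := by
        calc hdist (qinf Q r m) (qinf Q x' m)
            ≤ hdist (qinf Q r m) P + hdist P (qinf Q x' m) :=
              hdist_triangle _ _ _ (by rw [length_qinf]) (by rw [length_qinf])
          _ ≤ hdist (qinf Q r m) P +
              (hdist P (frag T x' m) + hdist (frag T x' m) (qinf Q x' m)) := by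
              have := hdist_triangle P (frag T x' m) (qinf Q x' m)
                (by rw [length_frag hxlen, hm]) (by rw [length_frag hxlen, length_qinf])
              omega
      have h4 : hdist (qinf Q r m) P = hdist P (qinf Q r m) := hdist_comm _ _
      omega
    have hmodint : (x' : ℤ) % q = (r : ℤ) % q := by exact_mod_cast hmodnat
    exact ⟨⟨(x' : ℤ), ⟨⟨⟨by omega, hmodint⟩, hxA⟩, hxlo, hxhi⟩, rfl⟩, hylo, hyhi⟩
  · rintro ⟨⟨x, ⟨⟨⟨hx0, hxmod⟩, hxA⟩, hxlo, hxhi⟩, rfl⟩, hylo, hyhi⟩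
    have hxx : (x.toNat : ℤ) = x := Int.toNat_of_nonneg hx0
    set x' := x.toNat with hx'def
    have hxlen : x' + m ≤ T.length := by omega
    have hmodnat : x' % q = r % q := by
      have : (x' : ℤ) % q = (r : ℤ) % q := by rw [hxx]; exact hxmod
      exact_mod_cast this
    have e1 : frag Tb x' m = qinf Q x' m := frag_qinf Q T.length x' m hxlen
    have e2 : qinf Q x' m = qinf Q r m := qinf_congr Q x' r m hmodnat
    have hwc : ((mis T Tb) ∩ Finset.Ico x' (x' + m)).card ≤ (t - s).toNat :=
      hwin x' (by omega) (by omega) (by push_cast; omega) (by push_cast; omega)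
    have hd2 : hdist (qinf Q r m) (frag T x' m) ≤ (t - s).toNat := by
      rw [← e2, ← e1, hdist_comm]
      calc hdist (frag T x' m) (frag Tb x' m)
          ≤ (mis T Tb ∩ Finset.Ico x' (x' + m)).card :=
            hdist_frag_le T Tb x' m (by rw [hTbdef, length_qinf]) hxlen
        _ ≤ (t - s).toNat := hwc
    have hd1 : hdist P (frag T x' m) ≤
        hdist P (qinf Q r m) + hdist (qinf Q r m) (frag T x' m) :=
      hdist_triangle _ _ _ (by rw [length_qinf]) (by rw [length_qinf, length_frag hxlen])
    have hk' : hdist P (frag T x' m) ≤ k := by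
      have hts : ((t - s).toNat : ℤ) = t - s := Int.toNat_of_nonneg (by omega)
      omega
    exact ⟨⟨x', ⟨hxlen, hk'⟩, ⟨by rw [hxx]; exact hxA, by omega, by omega⟩, by omega⟩,
      by omega, by omega⟩
end
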